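/- Let M be a given consumer rate budget and let μ₀ > 0 be a given rate. There exist a positive integer N₀ and a constant k_infl > 0 such that if N > N₀ and M_infl > N·k_infl, then the following is true: if Ω* = (μ*_infl, Λ*, X*) is a Nash equilibrium of the proxy game (with the tie-break convention that if Σ_{y∈C} μ*(y_infl|y) = 0 then μ*_infl(z) = M_infl/N for all z), then the influencer follows every producer with rate μ*_infl(z) ≥ μ₀ for all z ∈ C. -/

import Mathlib

open scoped Classical

noncomputable section

/-- Points of the `d`-dimensional Euclidean space. -/
abbrev E (d : ℕ) : Type := EuclideanSpace ℝ (Fin d)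

/-- An allocation `Ω = (μ_infl, Λ, X)`: `muI z` is the rate with which the
influencer follows producer `z`; `mu z y` is the rate with which consumer `y`
follows producer `z` directly; `muY y` is the rate with which consumer `y`
follows the influencer; `lam y` is the rate with which consumer `y` follows
outside sources; `X z` is the content topic created by producer `z`. -/
structure Alloc (d : ℕ) where
  muI : E d → ℝ
  mu  : E d → E d → ℝ
  muY : E d → ℝ
  lam : E d → ℝ
  X   : E d → E d

variable (d : ℕ)

/-- Admissibility of an allocation: nonnegative rates, the rate budget `M_infl`
of the influencer, the rate budget `M` of each consumer, and contents in `T`. -/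
def Admissible (T : Set (E d)) (C : Finset (E d)) (Minfl M : ℝ) (Ω : Alloc d) : Prop :=
  (∀ z ∈ C, 0 ≤ Ω.muI z) ∧ ((∑ z ∈ C, Ω.muI z) ≤ Minfl) ∧
  (∀ y ∈ C, (∀ z ∈ C.erase y, 0 ≤ Ω.mu z y) ∧ 0 ≤ Ω.muY y ∧ 0 ≤ Ω.lam y ∧
    ((∑ z ∈ C.erase y, Ω.mu z y) + Ω.muY y + Ω.lam y ≤ M)) ∧
  (∀ z ∈ C, Ω.X z ∈ T)

/-- `B(z|y) = q(x(z)|z) · p(x(z)|y)` where `p(x|y) = f(d(x,y))`, `q(x|y) = g(d(x,y))`. -/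
def Bfun (f g : ℝ → ℝ) (Ω : Alloc d) (z y : E d) : ℝ :=
  g (dist (Ω.X z) z) * f (dist (Ω.X z) y)

/-- The consumption utility `U_c(y|Ω)` of consumer `y`. -/
def Uc (f g I : ℝ → ℝ) (C : Finset (E d)) (rp r0 B0 : ℝ) (Ω : Alloc d) (y : E d) : ℝ :=
  rp * ∑ z ∈ C.erase y, Bfun d f g Ω z y * I (Ω.muI z) * I (Ω.muY y)
  + rp * ∑ z ∈ C.erase y, Bfun d f g Ω z y * I (Ω.mu z y)
  + r0 * B0 * I (Ω.lam y)

/-- The influencer utility `U_infl(μ_infl|Λ,X)`. -/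
def Uinfl (f g I : ℝ → ℝ) (C : Finset (E d)) (rp : ℝ) (Ω : Alloc d) : ℝ :=
  rp * ∑ z ∈ C, ∑ y ∈ C.erase z, Bfun d f g Ω z y * I (Ω.muI z) * I (Ω.muY y)

/-- The producer utility (social support) `U_p(z|Ω)` of producer `z`. -/
def Up (f g I : ℝ → ℝ) (C : Finset (E d)) (rp : ℝ) (Ω : Alloc d) (z : E d) : ℝ :=
  rp * ∑ y ∈ C.erase z, Bfun d f g Ω z y * I (Ω.muI z) * I (Ω.muY y)
  + rp * ∑ y ∈ C.erase z, Bfun d f g Ω z y * I (Ω.mu z y)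

/-- The social welfare `Φ(Ω) = Σ_{y∈C} U_c(y|Ω)`. -/
def Phi (f g I : ℝ → ℝ) (C : Finset (E d)) (rp r0 B0 : ℝ) (Ω : Alloc d) : ℝ :=
  ∑ y ∈ C, Uc d f g I C rp r0 B0 Ω y

/-- The allocation obtained from `Ω` when consumer `y` unilaterally deviates to
the rates `(mu', muY', lam')`. -/
def consDeviate (Ω : Alloc d) (y : E d) (mu' : E d → ℝ) (muY' lam' : ℝ) : Alloc d :=
  { Ω with
    mu := fun z w => if w = y then mu' z else Ω.mu z w,
    muY := Function.update Ω.muY y muY',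
    lam := Function.update Ω.lam y lam' }

/-- The influencer's rates are a best response: no feasible deviation of
`μ_infl` increases the influencer utility. -/
def InflBR (f g I : ℝ → ℝ) (C : Finset (E d)) (rp Minfl : ℝ) (Ω : Alloc d) : Prop :=
  ∀ μI' : E d → ℝ, (∀ z ∈ C, 0 ≤ μI' z) → ((∑ z ∈ C, μI' z) ≤ Minfl) →
    Uinfl d f g I C rp { Ω with muI := μI' } ≤ Uinfl d f g I C rp Ω

/-- Consumer `y`'s rates are a best response in the game with perfect
information: no feasible deviation increases the consumption utility. -/
def ConsBR (f g I : ℝ → ℝ) (C : Finset (E d)) (rp r0 B0 M : ℝ) (Ω : Alloc d) (y : E d) : Prop :=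
  ∀ (mu' : E d → ℝ) (muY' lam' : ℝ),
    (∀ z ∈ C.erase y, 0 ≤ mu' z) → 0 ≤ muY' → 0 ≤ lam' →
    ((∑ z ∈ C.erase y, mu' z) + muY' + lam' ≤ M) →
    Uc d f g I C rp r0 B0 (consDeviate d Ω y mu' muY' lam') y ≤ Uc d f g I C rp r0 B0 Ω y

/-- Producer `z`'s content is a best response: no deviation of the content
topic within `T` increases the producer's social support. -/
def ProdBR (f g I : ℝ → ℝ) (T : Set (E d)) (C : Finset (E d)) (rp : ℝ) (Ω : Alloc d) (z : E d) : Prop :=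
  ∀ x ∈ T, Up d f g I C rp { Ω with X := Function.update Ω.X z x } z ≤ Up d f g I C rp Ω z

/-- Nash equilibrium of the game with perfect information. -/
def NashPerfect (f g I : ℝ → ℝ) (T : Set (E d)) (C : Finset (E d))
    (rp r0 B0 Minfl M : ℝ) (Ω : Alloc d) : Prop :=
  Admissible d T C Minfl M Ω ∧
  InflBR d f g I C rp Minfl Ω ∧
  (∀ y ∈ C, ConsBR d f g I C rp r0 B0 M Ω y) ∧
  (∀ z ∈ C, ProdBR d f g I T C rp Ω z)

/-- Admissibility in the proxy game: in addition, consumers follow no producer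
directly. -/
def ProxyAdmissible (T : Set (E d)) (C : Finset (E d)) (Minfl M : ℝ) (Ω : Alloc d) : Prop :=
  Admissible d T C Minfl M Ω ∧ ∀ y ∈ C, ∀ z ∈ C.erase y, Ω.mu z y = 0

/-- Consumer `y`'s rates are a best response in the proxy game, where the
consumer may only follow the influencer and outside sources. -/
def ProxyConsBR (f g I : ℝ → ℝ) (C : Finset (E d)) (rp r0 B0 M : ℝ) (Ω : Alloc d) (y : E d) : Prop :=
  ∀ (muY' lam' : ℝ), 0 ≤ muY' → 0 ≤ lam' → muY' + lam' ≤ M →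
    Uc d f g I C rp r0 B0 (consDeviate d Ω y (fun _ => 0) muY' lam') y ≤
      Uc d f g I C rp r0 B0 Ω y

/-- Nash equilibrium of the proxy game. -/
def NashProxy (f g I : ℝ → ℝ) (T : Set (E d)) (C : Finset (E d))
    (rp r0 B0 Minfl M : ℝ) (Ω : Alloc d) : Prop :=
  ProxyAdmissible d T C Minfl M Ω ∧
  InflBR d f g I C rp Minfl Ω ∧
  (∀ y ∈ C, ProxyConsBR d f g I C rp r0 B0 M Ω y) ∧
  (∀ z ∈ C, ProdBR d f g I T C rp Ω z)

/-- Tie-break convention (Assumption 4): if no consumer follows the influencer,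
the influencer splits its rate budget uniformly. -/
def TieBreak (C : Finset (E d)) (Minfl : ℝ) (Ω : Alloc d) : Prop :=
  (∑ y ∈ C, Ω.muY y) = 0 → ∀ z ∈ C, Ω.muI z = Minfl / (C.card : ℝ)

/-- **Proposition 9.** Let `M` be a given consumer rate budget
and let `μ₀ > 0` be a given rate.  There exist a positive integer `N₀` and a
constant `k_infl > 0` such that if `N > N₀` and `M_infl > N·k_infl`, then the
following is true: if `Ω* = (μ*_infl, Λ*, X*)` is a Nash equilibrium of the
proxy game (with the tie-break convention that if `Σ_{y∈C} μ*(y_infl|y) = 0`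
then `μ*_infl(z) = M_infl/N` for all `z`), then the influencer follows every
producer with rate `μ*_infl(z) ≥ μ₀` for all `z ∈ C`. -/

lemma concave_incr {I : ℝ → ℝ} (hI : ConcaveOn ℝ (Set.Ici 0) I) {a c : ℝ}
    (ha : 0 ≤ a) (hac : a ≤ c) : I (2*c) - I c ≤ I (a + c) - I a := by
  rcases eq_or_lt_of_le hac with h | h
  · subst h; rw [two_mul]
  · have hc : 0 < 2*c - a := by linarith
    set t := (c-a)/(2*c-a) with ht
    have ht0 : 0 ≤ t := div_nonneg (by linarith) hc.le
    have ht1 : 0 ≤ 1 - t := by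
      have : t ≤ 1 := by rw [ht, div_le_one hc]; linarith
      linarith
    have hmem1 : a ∈ Set.Ici (0:ℝ) := ha
    have hmem2 : (2*c) ∈ Set.Ici (0:ℝ) := Set.mem_Ici.mpr (by linarith)
    have e1 : t • a + (1-t) • (2*c) = a + c := by
      have h' : t * (2*c - a) = c - a := by rw [ht]; exact div_mul_cancel₀ _ hc.ne'
      simp only [smul_eq_mul]; linear_combination (-1:ℝ) * h'
    have e2 : (1-t) • a + t • (2*c) = c := by
      have h' : t * (2*c - a) = c - a := by rw [ht]; exact div_mul_cancel₀ _ hc.ne'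
      simp only [smul_eq_mul]; linear_combination h'
    have h1 := hI.2 hmem1 hmem2 ht0 ht1 (by ring)
    have h2 := hI.2 hmem1 hmem2 ht1 ht0 (by ring)
    rw [e1] at h1
    rw [e2] at h2
    simp only [smul_eq_mul] at h1 h2
    linarith

lemma sum_diff_single {α : Type*} [DecidableEq α] {C : Finset α} {w : α} (hw : w ∈ C)
    (F G : α → ℝ) (h : ∀ x ∈ C, x ≠ w → F x = G x) :
    (∑ x ∈ C, F x) - ∑ x ∈ C, G x = F w - G w := by
  have he : (∑ x ∈ C.erase w, F x) = ∑ x ∈ C.erase w, G x :=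
    Finset.sum_congr rfl (fun x hx => by
      rw [Finset.mem_erase] at hx; exact h x hx.2 hx.1)
  rw [← Finset.add_sum_erase C F hw, ← Finset.add_sum_erase C G hw, he]
  ring

lemma sum_diff_pair {α : Type*} [DecidableEq α] {C : Finset α} {w w' : α} (hw : w ∈ C)
    (hw' : w' ∈ C) (hne : w' ≠ w) (F G : α → ℝ)
    (h : ∀ x ∈ C, x ≠ w → x ≠ w' → F x = G x) :
    (∑ x ∈ C, F x) - ∑ x ∈ C, G x = (F w - G w) + (F w' - G w') := by
  have hw'e : w' ∈ C.erase w := Finset.mem_erase.mpr ⟨hne, hw'⟩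
  have he : (∑ x ∈ (C.erase w).erase w', F x) = ∑ x ∈ (C.erase w).erase w', G x :=
    Finset.sum_congr rfl (fun x hx => by
      simp only [Finset.mem_erase] at hx; exact h x hx.2.2 hx.2.1 hx.1)
  rw [← Finset.add_sum_erase C F hw, ← Finset.add_sum_erase C G hw,
    ← Finset.add_sum_erase _ F hw'e, ← Finset.add_sum_erase _ G hw'e, he]
  ring

lemma Uinfl_rw (d : ℕ) (f g I : ℝ → ℝ) (C : Finset (E d)) (rp : ℝ) (Ω : Alloc d)
    (μI' : E d → ℝ) :
    Uinfl d f g I C rp { Ω with muI := μI' } =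
      rp * ∑ w ∈ C, I (μI' w) * ∑ y ∈ C.erase w, Bfun d f g Ω w y * I (Ω.muY y) := by
  unfold Uinfl
  congr 1
  refine Finset.sum_congr rfl (fun w _ => ?_)
  rw [Finset.mul_sum]
  refine Finset.sum_congr rfl (fun y _ => ?_)
  show Bfun d f g { Ω with muI := μI' } w y * I (μI' w) * I (Ω.muY y) = _
  have hB : Bfun d f g { Ω with muI := μI' } w y = Bfun d f g Ω w y := rfl
  rw [hB]; ring

lemma Uc_base (d : ℕ) (f g I : ℝ → ℝ) (C : Finset (E d)) (rp r0 B0 : ℝ) (Ω : Alloc d)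
    (y : E d) (hmu : ∀ z ∈ C.erase y, Ω.mu z y = 0) (hI0 : I 0 = 0) :
    Uc d f g I C rp r0 B0 Ω y =
      rp * (∑ z ∈ C.erase y, Bfun d f g Ω z y * I (Ω.muI z)) * I (Ω.muY y)
        + r0 * B0 * I (Ω.lam y) := by
  unfold Uc
  have h2 : (∑ z ∈ C.erase y, Bfun d f g Ω z y * I (Ω.mu z y)) = 0 :=
    Finset.sum_eq_zero fun z hz => by rw [hmu z hz, hI0, mul_zero]
  rw [h2, mul_zero, add_zero, mul_assoc, ← Finset.sum_mul]
  ring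

lemma Uc_dev (d : ℕ) (f g I : ℝ → ℝ) (C : Finset (E d)) (rp r0 B0 : ℝ) (Ω : Alloc d)
    (y : E d) (hI0 : I 0 = 0) (muY' lam' : ℝ) :
    Uc d f g I C rp r0 B0 (consDeviate d Ω y (fun _ => 0) muY' lam') y =
      rp * (∑ z ∈ C.erase y, Bfun d f g Ω z y * I (Ω.muI z)) * I muY'
        + r0 * B0 * I lam' := by
  have hB : ∀ z : E d, Bfun d f g (consDeviate d Ω y (fun _ => 0) muY' lam') z y
      = Bfun d f g Ω z y := fun z => rfl
  have h1 : (consDeviate d Ω y (fun _ => 0) muY' lam').muY y = muY' := by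
    show Function.update Ω.muY y muY' y = muY'
    exact Function.update_self _ _ _
  have h2 : (consDeviate d Ω y (fun _ => 0) muY' lam').lam y = lam' := by
    show Function.update Ω.lam y lam' y = lam'
    exact Function.update_self _ _ _
  have h3 : ∀ z : E d, (consDeviate d Ω y (fun _ => 0) muY' lam').mu z y = 0 :=
    fun z => if_pos rfl
  have h4 : (consDeviate d Ω y (fun _ => 0) muY' lam').muI = Ω.muI := rfl
  unfold Uc
  simp only [hB, h1, h2, h3, h4, hI0, mul_zero, Finset.sum_const_zero, add_zero]
  rw [mul_assoc, ← Finset.sum_mul]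
  ring

set_option maxHeartbeats 1000000 in
theorem stmt18 (d : ℕ) (f g I : ℝ → ℝ)
    (hf_cont : ContinuousOn f (Set.Ici 0)) (hf_anti : StrictAntiOn f (Set.Ici 0))
    (hf_rng : ∀ t ∈ Set.Ici (0 : ℝ), f t ∈ Set.Ioc (0 : ℝ) 1)
    (hg_cont : ContinuousOn g (Set.Ici 0)) (hg_anti : StrictAntiOn g (Set.Ici 0))
    (hg_rng : ∀ t ∈ Set.Ici (0 : ℝ), g t ∈ Set.Ioc (0 : ℝ) 1)
    (hI_diff : ContDiffOn ℝ 1 I (Set.Ici 0))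
    (hI_mono : StrictMonoOn I (Set.Ici 0))
    (hI_conc : StrictConcaveOn ℝ (Set.Ici 0) I)
    (hI_zero : I 0 = 0)
    (hI_lim : Filter.Tendsto I Filter.atTop (nhds 1))
    (T : Set (E d)) (hT_ne : T.Nonempty) (hT_conv : Convex ℝ T) (hT_comp : IsCompact T)
    (rp r0 B0 : ℝ) (hrp : 0 < rp) (hr0 : 0 < r0) (hB0 : 0 < B0)
    (M : ℝ) (hM : 0 < M)
    (μ₀ : ℝ) (hμ₀ : 0 < μ₀) :
    ∃ (N₀ : ℕ) (kinfl : ℝ), 0 < kinfl ∧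
      ∀ C : Finset (E d), ↑C ⊆ T → N₀ < C.card →
        ∀ Minfl : ℝ, (C.card : ℝ) * kinfl < Minfl →
          ∀ Ω : Alloc d, NashProxy d f g I T C rp r0 B0 Minfl M Ω →
            TieBreak d C Minfl Ω →
            ∀ z ∈ C, μ₀ ≤ Ω.muI z := by
  classical
  -- basic facts about I
  have hIci : ∀ t : ℝ, 0 ≤ t → t ∈ Set.Ici (0:ℝ) := fun t ht => Set.mem_Ici.mpr ht
  have hImono : ∀ a b : ℝ, 0 ≤ a → a ≤ b → I a ≤ I b := fun a b ha hab =>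
    hI_mono.monotoneOn (hIci a ha) (hIci b (le_trans ha hab)) hab
  have hIlt : ∀ a b : ℝ, 0 ≤ a → a < b → I a < I b := fun a b ha hab =>
    hI_mono (hIci a ha) (hIci b (le_trans ha hab.le)) hab
  have hInn : ∀ t : ℝ, 0 ≤ t → 0 ≤ I t := fun t ht => hI_zero ▸ hImono 0 t le_rfl ht
  have hIpos : ∀ t : ℝ, 0 < t → 0 < I t := fun t ht => hI_zero ▸ hIlt 0 t le_rfl ht
  have hIle1 : ∀ t : ℝ, 0 ≤ t → I t ≤ 1 := by
    intro t ht
    refine ge_of_tendsto hI_lim ?_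
    filter_upwards [Filter.eventually_ge_atTop t] with s hs
    exact hImono t s ht hs
  -- constants
  obtain ⟨D, hDdef⟩ : ∃ x : ℝ, x = Metric.diam T := ⟨_, rfl⟩
  have hD : 0 ≤ D := by rw [hDdef]; exact Metric.diam_nonneg
  obtain ⟨hgD, hgD1⟩ := hg_rng D (hIci D hD)
  obtain ⟨hfD, hfD1⟩ := hf_rng D (hIci D hD)
  obtain ⟨Bm, hBmdef⟩ : ∃ x : ℝ, x = g D * f D := ⟨_, rfl⟩
  have hBmpos : 0 < Bm := by rw [hBmdef]; exact mul_pos hgD hfD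
  obtain ⟨ν, hνdef⟩ : ∃ x : ℝ, x = M / 2 := ⟨_, rfl⟩
  have hνpos : 0 < ν := by rw [hνdef]; linarith
  obtain ⟨Δc, hΔcdef⟩ : ∃ x : ℝ, x = I (2 * ν) - I ν := ⟨_, rfl⟩
  have hΔcpos : 0 < Δc := by
    rw [hΔcdef]; exact sub_pos.mpr (hIlt ν (2*ν) hνpos.le (by linarith))
  obtain ⟨Δ, hΔdef⟩ : ∃ x : ℝ, x = I (2 * μ₀) - I μ₀ := ⟨_, rfl⟩
  have hΔpos : 0 < Δ := by
    rw [hΔdef]; exact sub_pos.mpr (hIlt μ₀ (2*μ₀) hμ₀.le (by linarith))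
  have hIνpos : 0 < I ν := hIpos ν hνpos
  have hIμ₀pos : 0 < I μ₀ := hIpos μ₀ hμ₀
  have hminpos : 0 < min 1 (2 * I ν) := lt_min one_pos (by linarith)
  obtain ⟨κ, hκdef⟩ : ∃ x : ℝ, x = Bm * min 1 (2 * I ν) * Δ / 2 := ⟨_, rfl⟩
  have hκpos : 0 < κ := by
    rw [hκdef]
    exact div_pos (mul_pos (mul_pos hBmpos hminpos) hΔpos) two_pos
  obtain ⟨t₀, ht₀⟩ : ∃ t₀ : ℝ, ∀ t ≥ t₀, 1 - κ < I t := by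
    have h1 : (1:ℝ) - κ < 1 := by linarith
    exact Filter.eventually_atTop.mp (hI_lim.eventually (eventually_gt_nhds h1))
  obtain ⟨kinfl, hkdef⟩ : ∃ x : ℝ, x = max (2 * μ₀) (t₀ + μ₀) := ⟨_, rfl⟩
  have hkμ : 2 * μ₀ ≤ kinfl := by rw [hkdef]; exact le_max_left _ _
  have hkt : t₀ + μ₀ ≤ kinfl := by rw [hkdef]; exact le_max_right _ _
  have hkpos : 0 < kinfl := by linarith
  have hIk : 1 - κ < I (kinfl - μ₀) := ht₀ _ (by linarith)
  have hkm0 : 0 ≤ kinfl - μ₀ := by linarith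
  obtain ⟨q, hqdef⟩ : ∃ x : ℝ, x = rp * (Bm * (I μ₀ * Δc)) := ⟨_, rfl⟩
  have hqpos : 0 < q := by rw [hqdef]; positivity
  refine ⟨2 + Nat.ceil (r0 * B0 / q), kinfl, hkpos, ?_⟩
  intro C hCT hN Minfl hMinfl Ω hNash hTie z hz
  obtain ⟨⟨⟨hmuI0, hmuIsum, hconsAd, hXT⟩, hmu0⟩, hIBR, hCBR, -⟩ := hNash
  have hNR : (2:ℝ) + (Nat.ceil (r0 * B0 / q) : ℝ) < (C.card:ℝ) := by
    have : ((2 + Nat.ceil (r0 * B0 / q) : ℕ) : ℝ) < (C.card:ℝ) := Nat.cast_lt.mpr hN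
    push_cast at this; linarith
  have hNq : r0 * B0 < q * ((C.card:ℝ) - 2) := by
    have h1 : r0 * B0 / q ≤ (Nat.ceil (r0 * B0 / q) : ℝ) := Nat.le_ceil _
    have h2 : r0 * B0 / q < (C.card:ℝ) - 2 := by linarith
    have h3 := (div_lt_iff₀ hqpos).mp h2
    linarith
  have hN3 : 3 ≤ C.card := by
    have : 2 < C.card := lt_of_le_of_lt (Nat.le_add_right 2 _) hN
    omega
  have hNR3 : (3:ℝ) ≤ (C.card:ℝ) := by exact_mod_cast hN3
  have hNpos : (0:ℝ) < (C.card:ℝ) := by linarith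
  -- bounds on B
  have hBge : ∀ w ∈ C, ∀ y ∈ C, Bm ≤ Bfun d f g Ω w y := by
    intro w hw y hy
    have h1 : dist (Ω.X w) w ≤ D := by
      rw [hDdef]
      exact Metric.dist_le_diam_of_mem hT_comp.isBounded (hXT w hw) (hCT hw)
    have h2 : dist (Ω.X w) y ≤ D := by
      rw [hDdef]
      exact Metric.dist_le_diam_of_mem hT_comp.isBounded (hXT w hw) (hCT hy)
    have hg1 : g D ≤ g (dist (Ω.X w) w) :=
      hg_anti.antitoneOn (hIci _ dist_nonneg) (hIci D hD) h1
    have hf1 : f D ≤ f (dist (Ω.X w) y) :=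
      hf_anti.antitoneOn (hIci _ dist_nonneg) (hIci D hD) h2
    have hg2 := (hg_rng (dist (Ω.X w) w) (hIci _ dist_nonneg)).1
    rw [hBmdef]
    unfold Bfun
    exact mul_le_mul hg1 hf1 hfD.le (by linarith)
  have hBle : ∀ w ∈ C, ∀ y ∈ C, Bfun d f g Ω w y ≤ 1 := by
    intro w hw y hy
    have hg2 := hg_rng (dist (Ω.X w) w) (hIci (dist (Ω.X w) w) dist_nonneg)
    have hf2 := hf_rng (dist (Ω.X w) y) (hIci (dist (Ω.X w) y) dist_nonneg)
    unfold Bfun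
    exact mul_le_one₀ hg2.2 hf2.1.le hf2.2
  have hBnn : ∀ w ∈ C, ∀ y ∈ C, 0 ≤ Bfun d f g Ω w y := fun w hw y hy =>
    le_trans hBmpos.le (hBge w hw y hy)
  -- consumer admissibility pieces
  have hmuY0 : ∀ y ∈ C, 0 ≤ Ω.muY y := fun y hy => (hconsAd y hy).2.1
  have hlam0 : ∀ y ∈ C, 0 ≤ Ω.lam y := fun y hy => (hconsAd y hy).2.2.1
  -- the influencer coefficients
  obtain ⟨cz, hczdef⟩ : ∃ x : E d → ℝ,
      x = fun w => ∑ y ∈ C.erase w, Bfun d f g Ω w y * I (Ω.muY y) := ⟨_, rfl⟩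
  have hczeq : ∀ w, cz w = ∑ y ∈ C.erase w, Bfun d f g Ω w y * I (Ω.muY y) := by
    intro w; rw [hczdef]
  have hcznn : ∀ w ∈ C, 0 ≤ cz w := by
    intro w hw
    rw [hczeq w]
    exact Finset.sum_nonneg fun y hy => mul_nonneg
      (hBnn w hw y (Finset.mem_of_mem_erase hy)) (hInn _ (hmuY0 y (Finset.mem_of_mem_erase hy)))
  have hUrw : ∀ μI' : E d → ℝ, Uinfl d f g I C rp { Ω with muI := μI' }
      = rp * ∑ w ∈ C, I (μI' w) * cz w := by
    intro μI'
    rw [Uinfl_rw d f g I C rp Ω μI']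
    congr 1
    exact Finset.sum_congr rfl fun w _ => by rw [hczeq w]
  have hUΩ : Uinfl d f g I C rp Ω = rp * ∑ w ∈ C, I (Ω.muI w) * cz w := hUrw Ω.muI
  by_cases hS : (∑ y ∈ C, Ω.muY y) = 0
  · -- tie-break case
    rw [hTie hS z hz]
    rw [le_div_iff₀ hNpos]
    have h1 : (C.card:ℝ) * kinfl < Minfl := hMinfl
    have h2 : (C.card:ℝ) * μ₀ ≤ (C.card:ℝ) * kinfl :=
      mul_le_mul_of_nonneg_left (by linarith) hNpos.le
    linarith
  · -- main case: somebody follows the influencer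
    have hSnz : ∃ ys ∈ C, 0 < Ω.muY ys := by
      by_contra h; push_neg at h
      exact hS (Finset.sum_eq_zero fun y hy => le_antisymm (h y hy) (hmuY0 y hy))
    obtain ⟨ys, hys, hmuYys⟩ := hSnz
    -- the influencer budget binds
    have hsum : (∑ w ∈ C, Ω.muI w) = Minfl := by
      by_contra hne
      have hlt : (∑ w ∈ C, Ω.muI w) < Minfl := lt_of_le_of_ne hmuIsum hne
      have hcard2 : 0 < (C.erase ys).card := by
        rw [Finset.card_erase_of_mem hys]; omega
      obtain ⟨w₀, hw₀⟩ := Finset.card_pos.mp hcard2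
      have hw₀C := Finset.mem_of_mem_erase hw₀
      have hw₀ne : w₀ ≠ ys := (Finset.mem_erase.mp hw₀).1
      have hczpos : 0 < cz w₀ := by
        have hys' : ys ∈ C.erase w₀ := Finset.mem_erase.mpr ⟨Ne.symm hw₀ne, hys⟩
        have hterm : 0 < Bfun d f g Ω w₀ ys * I (Ω.muY ys) :=
          mul_pos (lt_of_lt_of_le hBmpos (hBge w₀ hw₀C ys hys)) (hIpos _ hmuYys)
        rw [hczeq w₀]
        refine lt_of_lt_of_le hterm (Finset.single_le_sum
          (fun y hy => mul_nonneg (hBnn w₀ hw₀C y (Finset.mem_of_mem_erase hy))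
            (hInn _ (hmuY0 y (Finset.mem_of_mem_erase hy)))) hys')
      obtain ⟨ε, hεdef⟩ : ∃ x : ℝ, x = Minfl - ∑ w ∈ C, Ω.muI w := ⟨_, rfl⟩
      have hεpos : 0 < ε := by rw [hεdef]; linarith
      obtain ⟨μI', hμI'def⟩ : ∃ x : E d → ℝ,
          x = Function.update Ω.muI w₀ (Ω.muI w₀ + ε) := ⟨_, rfl⟩
      have hval : ∀ x, x ≠ w₀ → μI' x = Ω.muI x := fun x hx => by
        rw [hμI'def]; exact Function.update_of_ne hx _ _
      have hvalw : μI' w₀ = Ω.muI w₀ + ε := by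
        rw [hμI'def]; exact Function.update_self _ _ _
      have hnn : ∀ x ∈ C, 0 ≤ μI' x := by
        intro x hx
        rcases eq_or_ne x w₀ with rfl | h1
        · rw [hvalw]; have := hmuI0 x hx; linarith
        · rw [hval x h1]; exact hmuI0 x hx
      have hsum' : (∑ x ∈ C, μI' x) ≤ Minfl := by
        have hd := sum_diff_single hw₀C μI' Ω.muI (fun x _ hx => hval x hx)
        rw [hvalw] at hd
        linarith
      have hBR := hIBR μI' hnn hsum'
      rw [hUrw μI', hUΩ] at hBR
      have hS' : (∑ x ∈ C, I (μI' x) * cz x) ≤ ∑ x ∈ C, I (Ω.muI x) * cz x :=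
        le_of_mul_le_mul_left hBR hrp
      have hd2 := sum_diff_single hw₀C (fun x => I (μI' x) * cz x)
        (fun x => I (Ω.muI x) * cz x) (fun x _ hx => by simp only [hval x hx])
      simp only [hvalw] at hd2
      have hstrict : I (Ω.muI w₀) < I (Ω.muI w₀ + ε) :=
        hIlt _ _ (hmuI0 w₀ hw₀C) (by linarith [hmuI0 w₀ hw₀C])
      have hprod : 0 < (I (Ω.muI w₀ + ε) - I (Ω.muI w₀)) * cz w₀ :=
        mul_pos (sub_pos.mpr hstrict) hczpos
      linarith
    -- the transfer inequality at the influencer best response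
    have htrans : ∀ w ∈ C, ∀ w' ∈ C, w ≠ w' → ∀ ε : ℝ, 0 ≤ ε → ε ≤ Ω.muI w' →
        cz w * (I (Ω.muI w + ε) - I (Ω.muI w))
          ≤ cz w' * (I (Ω.muI w') - I (Ω.muI w' - ε)) := by
      intro w hw w' hw' hne ε hε hεle
      obtain ⟨μI', hμI'def⟩ : ∃ x : E d → ℝ,
          x = Function.update (Function.update Ω.muI w' (Ω.muI w' - ε)) w
            (Ω.muI w + ε) := ⟨_, rfl⟩
      have hval_w : μI' w = Ω.muI w + ε := by
        rw [hμI'def]; exact Function.update_self _ _ _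
      have hval_w' : μI' w' = Ω.muI w' - ε := by
        rw [hμI'def, Function.update_of_ne (Ne.symm hne)]
        exact Function.update_self _ _ _
      have hval : ∀ x, x ≠ w → x ≠ w' → μI' x = Ω.muI x := fun x h1 h2 => by
        rw [hμI'def, Function.update_of_ne h1]
        exact Function.update_of_ne h2 _ _
      have hnn : ∀ x ∈ C, 0 ≤ μI' x := by
        intro x hx
        rcases eq_or_ne x w with rfl | h1
        · rw [hval_w]; have := hmuI0 x hx; linarith
        rcases eq_or_ne x w' with rfl | h2
        · rw [hval_w']; linarith
        · rw [hval x h1 h2]; exact hmuI0 x hx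
      have hsum' : (∑ x ∈ C, μI' x) ≤ Minfl := by
        have hd := sum_diff_pair hw hw' (Ne.symm hne) μI' Ω.muI
          (fun x _ h1 h2 => hval x h1 h2)
        rw [hval_w, hval_w'] at hd
        linarith [hmuIsum]
      have hBR := hIBR μI' hnn hsum'
      rw [hUrw μI', hUΩ] at hBR
      have hS' : (∑ x ∈ C, I (μI' x) * cz x) ≤ ∑ x ∈ C, I (Ω.muI x) * cz x :=
        le_of_mul_le_mul_left hBR hrp
      have hd2 := sum_diff_pair hw hw' (Ne.symm hne) (fun x => I (μI' x) * cz x)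
        (fun x => I (Ω.muI x) * cz x) (fun x _ h1 h2 => by simp only [hval x h1 h2])
      simp only [hval_w, hval_w'] at hd2
      linarith
    -- a producer followed with a large rate
    have hmax : ∃ w' ∈ C, kinfl < Ω.muI w' := by
      by_contra h; push_neg at h
      have h2 : (∑ w ∈ C, Ω.muI w) ≤ ∑ _w ∈ C, kinfl := Finset.sum_le_sum h
      rw [Finset.sum_const, hsum, nsmul_eq_mul] at h2
      have h3 : (C.card:ℝ) * kinfl < Minfl := hMinfl
      linarith
    -- sum of I(muY)
    have hSInn : ∀ y ∈ C, 0 ≤ I (Ω.muY y) := fun y hy => hInn _ (hmuY0 y hy)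
    obtain ⟨SI, hSIdef⟩ : ∃ x : ℝ, x = ∑ y ∈ C, I (Ω.muY y) := ⟨_, rfl⟩
    have hSIpos : 0 < SI := by
      rw [hSIdef]
      exact lt_of_lt_of_le (hIpos _ hmuYys) (Finset.single_le_sum hSInn hys)
    have hczle : ∀ w ∈ C, cz w ≤ SI := by
      intro w hw
      rw [hczeq w, hSIdef]
      calc (∑ y ∈ C.erase w, Bfun d f g Ω w y * I (Ω.muY y))
          ≤ ∑ y ∈ C.erase w, I (Ω.muY y) :=
            Finset.sum_le_sum fun y hy =>
              mul_le_of_le_one_left (hInn _ (hmuY0 y (Finset.mem_of_mem_erase hy)))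
                (hBle w hw y (Finset.mem_of_mem_erase hy))
        _ ≤ ∑ y ∈ C, I (Ω.muY y) :=
            Finset.sum_le_sum_of_subset_of_nonneg (Finset.erase_subset _ _)
              (fun y hy _ => hSInn y hy)
    -- a maximizing consumer
    obtain ⟨yst, hyst, hystmax⟩ := Finset.exists_max_image C (fun y => I (Ω.muY y)) ⟨ys, hys⟩
    -- Stage 1 : every producer except possibly yst is followed with rate ≥ μ₀
    have hstage1 : ∀ w ∈ C, w ≠ yst → μ₀ ≤ Ω.muI w := by
      intro w hw hwne
      by_contra hlt; push_neg at hlt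
      obtain ⟨w', hw', hkw'⟩ := hmax
      have hwne' : w ≠ w' := fun h => by rw [h] at hlt; linarith
      have ht := htrans w hw w' hw' hwne' μ₀ hμ₀.le (by linarith)
      have hErw : SI = I (Ω.muY w) + ∑ y ∈ C.erase w, I (Ω.muY y) := by
        rw [hSIdef]
        exact (Finset.add_sum_erase C (fun y => I (Ω.muY y)) hw).symm
      have hE2 : I (Ω.muY yst) ≤ ∑ y ∈ C.erase w, I (Ω.muY y) :=
        Finset.single_le_sum (fun y hy => hSInn y (Finset.mem_of_mem_erase hy))
          (Finset.mem_erase.mpr ⟨Ne.symm hwne, hyst⟩)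
      have hEhalf : SI / 2 ≤ ∑ y ∈ C.erase w, I (Ω.muY y) := by
        have := hystmax w hw
        linarith
      have hczw : Bm * (SI / 2) ≤ cz w := by
        rw [hczeq w]
        calc Bm * (SI / 2) ≤ Bm * ∑ y ∈ C.erase w, I (Ω.muY y) :=
              mul_le_mul_of_nonneg_left hEhalf hBmpos.le
          _ = ∑ y ∈ C.erase w, Bm * I (Ω.muY y) := Finset.mul_sum _ _ _
          _ ≤ ∑ y ∈ C.erase w, Bfun d f g Ω w y * I (Ω.muY y) :=
              Finset.sum_le_sum fun y hy =>
                mul_le_mul_of_nonneg_right (hBge w hw y (Finset.mem_of_mem_erase hy))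
                  (hSInn y (Finset.mem_of_mem_erase hy))
      have hinc1 : Δ ≤ I (Ω.muI w + μ₀) - I (Ω.muI w) := by
        rw [hΔdef]
        exact concave_incr hI_conc.concaveOn (hmuI0 w hw) hlt.le
      have hw'nn : 0 ≤ Ω.muI w' := hmuI0 w' hw'
      have hinc2 : I (Ω.muI w') - I (Ω.muI w' - μ₀) ≤ 1 - I (kinfl - μ₀) := by
        have h1 : I (Ω.muI w') ≤ 1 := hIle1 _ hw'nn
        have h2 : I (kinfl - μ₀) ≤ I (Ω.muI w' - μ₀) := hImono _ _ hkm0 (by linarith)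
        linarith
      have hinc2nn : 0 ≤ I (Ω.muI w') - I (Ω.muI w' - μ₀) :=
        sub_nonneg.mpr (hImono _ _ (by linarith) (by linarith))
      have hup : cz w' * (I (Ω.muI w') - I (Ω.muI w' - μ₀)) ≤ SI * (1 - I (kinfl - μ₀)) :=
        mul_le_mul (hczle w' hw') hinc2 hinc2nn hSIpos.le
      have hlow : Bm * (SI / 2) * Δ ≤ cz w * (I (Ω.muI w + μ₀) - I (Ω.muI w)) :=
        mul_le_mul hczw hinc1 hΔpos.le (hcznn w hw)
      have hκ1 : 1 - I (kinfl - μ₀) < κ := by linarith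
      have hκ2 : κ ≤ Bm * Δ / 2 := by
        have h1 : min 1 (2 * I ν) ≤ 1 := min_le_left _ _
        have h2 := mul_le_mul_of_nonneg_right
          (mul_le_mul_of_nonneg_left h1 hBmpos.le) hΔpos.le
        rw [hκdef]
        linarith
      have hx1 := mul_lt_mul_of_pos_left hκ1 hSIpos
      have hx2 := mul_le_mul_of_nonneg_left hκ2 hSIpos.le
      linarith
    -- Stage 2 : every consumer follows the influencer with rate ≥ ν
    have hstage2 : ∀ y ∈ C, ν ≤ Ω.muY y := by
      intro y hy
      by_contra hlt; push_neg at hlt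
      obtain ⟨hmunn, hmuYnn, hlamnn, hbud⟩ := hconsAd y hy
      have hmusum : (∑ w ∈ C.erase y, Ω.mu w y) = 0 :=
        Finset.sum_eq_zero fun w hw => hmu0 y hy w hw
      have hbud' : Ω.muY y + Ω.lam y ≤ M := by rw [hmusum] at hbud; linarith
      obtain ⟨δ, hδdef⟩ : ∃ x : ℝ, x = min ν (Ω.lam y) := ⟨_, rfl⟩
      have hδ0 : 0 ≤ δ := by rw [hδdef]; exact le_min hνpos.le hlamnn
      have hδlam : δ ≤ Ω.lam y := by rw [hδdef]; exact min_le_right _ _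
      have h1 : 0 ≤ Ω.muY y + ν := by linarith
      have h2 : 0 ≤ Ω.lam y - δ := by linarith
      have h3 : (Ω.muY y + ν) + (Ω.lam y - δ) ≤ M := by
        rcases le_total ν (Ω.lam y) with hc | hc
        · have hδν : δ = ν := by rw [hδdef]; exact min_eq_left hc
          rw [hδν]; linarith
        · have hδν : δ = Ω.lam y := by rw [hδdef]; exact min_eq_right hc
          rw [hδν, hνdef]; linarith
      have hBRc := hCBR y hy (Ω.muY y + ν) (Ω.lam y - δ) h1 h2 h3
      rw [Uc_dev d f g I C rp r0 B0 Ω y hI_zero (Ω.muY y + ν) (Ω.lam y - δ),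
        Uc_base d f g I C rp r0 B0 Ω y (hmu0 y hy) hI_zero] at hBRc
      obtain ⟨A, hAdef⟩ : ∃ x : ℝ,
          x = ∑ w ∈ C.erase y, Bfun d f g Ω w y * I (Ω.muI w) := ⟨_, rfl⟩
      rw [← hAdef] at hBRc
      have hsub : (C.erase y).erase yst ⊆ C.erase y := Finset.erase_subset _ _
      have hcardy : (C.erase y).card = C.card - 1 := Finset.card_erase_of_mem hy
      have hcard : C.card - 2 ≤ ((C.erase y).erase yst).card := by
        have h4 := Finset.pred_card_le_card_erase (a := yst) (s := C.erase y)
        omega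
      have hcardR : (C.card:ℝ) - 2 ≤ (((C.erase y).erase yst).card : ℝ) := by
        have h5 : ((C.card - 2 : ℕ) : ℝ) = (C.card:ℝ) - 2 := by
          have : 2 ≤ C.card := by omega
          push_cast [Nat.cast_sub this]; ring
        rw [← h5]; exact_mod_cast hcard
      have hAlb : Bm * I μ₀ * ((C.card:ℝ) - 2) ≤ A := by
        have hterm : ∀ w ∈ (C.erase y).erase yst,
            Bm * I μ₀ ≤ Bfun d f g Ω w y * I (Ω.muI w) := by
          intro w hw
          have hw1 : w ∈ C.erase y := Finset.mem_of_mem_erase hw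
          have hwC : w ∈ C := Finset.mem_of_mem_erase hw1
          have hwyst : w ≠ yst := (Finset.mem_erase.mp hw).1
          have hμ : μ₀ ≤ Ω.muI w := hstage1 w hwC hwyst
          have hIμ : I μ₀ ≤ I (Ω.muI w) := hImono _ _ hμ₀.le hμ
          exact mul_le_mul (hBge w hwC y hy) hIμ hIμ₀pos.le
            (le_trans hBmpos.le (hBge w hwC y hy))
        rw [hAdef]
        calc Bm * I μ₀ * ((C.card:ℝ) - 2)
            ≤ Bm * I μ₀ * (((C.erase y).erase yst).card : ℝ) :=
              mul_le_mul_of_nonneg_left hcardR (mul_pos hBmpos hIμ₀pos).le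
          _ = ∑ _w ∈ (C.erase y).erase yst, Bm * I μ₀ := by
              rw [Finset.sum_const, nsmul_eq_mul]; ring
          _ ≤ ∑ w ∈ (C.erase y).erase yst, Bfun d f g Ω w y * I (Ω.muI w) :=
              Finset.sum_le_sum hterm
          _ ≤ ∑ w ∈ C.erase y, Bfun d f g Ω w y * I (Ω.muI w) :=
              Finset.sum_le_sum_of_subset_of_nonneg hsub fun w hw _ =>
                mul_nonneg (hBnn w (Finset.mem_of_mem_erase hw) y hy)
                  (hInn _ (hmuI0 w (Finset.mem_of_mem_erase hw)))
      have hA0 : 0 ≤ A := by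
        rw [hAdef]
        exact Finset.sum_nonneg fun w hw =>
          mul_nonneg (hBnn w (Finset.mem_of_mem_erase hw) y hy)
            (hInn _ (hmuI0 w (Finset.mem_of_mem_erase hw)))
      have hincc : Δc ≤ I (Ω.muY y + ν) - I (Ω.muY y) := by
        rw [hΔcdef]
        exact concave_incr hI_conc.concaveOn hmuYnn hlt.le
      have hloss : I (Ω.lam y) - I (Ω.lam y - δ) ≤ 1 := by
        have hx1 := hIle1 (Ω.lam y) hlamnn
        have hx2 := hInn (Ω.lam y - δ) h2
        linarith
      have e1 : q * ((C.card:ℝ) - 2) ≤ rp * A * Δc := by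
        have h5 := mul_le_mul_of_nonneg_left hAlb (mul_pos hrp hΔcpos).le
        rw [hqdef]
        linarith
      have e2 : rp * A * Δc ≤ rp * A * (I (Ω.muY y + ν) - I (Ω.muY y)) :=
        mul_le_mul_of_nonneg_left hincc (mul_nonneg hrp.le hA0)
      have e3 : rp * A * (I (Ω.muY y + ν) - I (Ω.muY y))
          ≤ r0 * B0 * (I (Ω.lam y) - I (Ω.lam y - δ)) := by
        linarith
      have e4 : r0 * B0 * (I (Ω.lam y) - I (Ω.lam y - δ)) ≤ r0 * B0 := by
        have h6 := mul_le_mul_of_nonneg_left hloss (mul_pos hr0 hB0).le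
        linarith
      linarith
    -- Stage 3 : conclusion
    by_contra hlt; push_neg at hlt
    obtain ⟨w', hw', hkw'⟩ := hmax
    have hne : z ≠ w' := fun h => by rw [h] at hlt; linarith
    have ht := htrans z hz w' hw' hne μ₀ hμ₀.le (by linarith)
    have hcardz : (C.erase z).card = C.card - 1 := Finset.card_erase_of_mem hz
    have hcardw : (C.erase w').card = C.card - 1 := Finset.card_erase_of_mem hw'
    have hcastN : ((C.card - 1 : ℕ) : ℝ) = (C.card:ℝ) - 1 := by
      have : 1 ≤ C.card := by omega
      push_cast [Nat.cast_sub this]; ring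
    have hczlb : Bm * I ν * ((C.card:ℝ) - 1) ≤ cz z := by
      rw [hczeq z]
      calc Bm * I ν * ((C.card:ℝ) - 1) = ∑ _y ∈ C.erase z, Bm * I ν := by
            rw [Finset.sum_const, hcardz, nsmul_eq_mul, hcastN]; ring
        _ ≤ ∑ y ∈ C.erase z, Bfun d f g Ω z y * I (Ω.muY y) :=
            Finset.sum_le_sum fun y hy => by
              have hyC := Finset.mem_of_mem_erase hy
              exact mul_le_mul (hBge z hz y hyC)
                (hImono _ _ hνpos.le (hstage2 y hyC)) hIνpos.le
                (le_trans hBmpos.le (hBge z hz y hyC))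
    have hczub : cz w' ≤ (C.card:ℝ) - 1 := by
      rw [hczeq w']
      calc (∑ y ∈ C.erase w', Bfun d f g Ω w' y * I (Ω.muY y))
          ≤ ∑ _y ∈ C.erase w', (1:ℝ) := Finset.sum_le_sum fun y hy => by
            have hyC := Finset.mem_of_mem_erase hy
            exact mul_le_one₀ (hBle w' hw' y hyC) (hInn _ (hmuY0 y hyC))
              (hIle1 _ (hmuY0 y hyC))
        _ = (C.card:ℝ) - 1 := by rw [Finset.sum_const, hcardw, nsmul_eq_mul, hcastN]; ring
    have hinc1 : Δ ≤ I (Ω.muI z + μ₀) - I (Ω.muI z) := by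
      rw [hΔdef]
      exact concave_incr hI_conc.concaveOn (hmuI0 z hz) hlt.le
    have hw'nn : 0 ≤ Ω.muI w' := hmuI0 w' hw'
    have hinc2 : I (Ω.muI w') - I (Ω.muI w' - μ₀) ≤ 1 - I (kinfl - μ₀) := by
      have h1 : I (Ω.muI w') ≤ 1 := hIle1 _ hw'nn
      have h2 : I (kinfl - μ₀) ≤ I (Ω.muI w' - μ₀) := hImono _ _ hkm0 (by linarith)
      linarith
    have hinc2nn : 0 ≤ I (Ω.muI w') - I (Ω.muI w' - μ₀) :=
      sub_nonneg.mpr (hImono _ _ (by linarith) (by linarith))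
    have hN1 : (0:ℝ) < (C.card:ℝ) - 1 := by linarith
    have hup : cz w' * (I (Ω.muI w') - I (Ω.muI w' - μ₀))
        ≤ ((C.card:ℝ) - 1) * (1 - I (kinfl - μ₀)) :=
      mul_le_mul hczub hinc2 hinc2nn hN1.le
    have hlow : Bm * I ν * ((C.card:ℝ) - 1) * Δ ≤ cz z * (I (Ω.muI z + μ₀) - I (Ω.muI z)) :=
      mul_le_mul hczlb hinc1 hΔpos.le (hcznn z hz)
    have hκ1 : 1 - I (kinfl - μ₀) < κ := by linarith
    have hκ3 : κ ≤ Bm * I ν * Δ := by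
      have h1 : min 1 (2 * I ν) ≤ 2 * I ν := min_le_right _ _
      have h2 := mul_le_mul_of_nonneg_right
        (mul_le_mul_of_nonneg_left h1 hBmpos.le) hΔpos.le
      rw [hκdef]
      linarith
    have hx1 := mul_lt_mul_of_pos_left hκ1 hN1
    have hx2 := mul_le_mul_of_nonneg_left hκ3 hN1.le
    linarith
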